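/- arXiv:1306.3772 — 4 statements merged into one kernel-verified Lean document; each statement's English description precedes it below -/
import Mathlib

section
/- For every w ∈ ℕ and every finite set S of binary strings, all of length exactly w, with |S| ≥ 2, there exists a binary string p such that 3·|S_⊑p| ≥ |S|, 3·|S_⊑p| ≤ 2·|S|, 3·|S_¬⊑p| ≥ |S|, and 3·|S_¬⊑p| ≤ 2·|S|. -/
private lemma prefix_iff_true (p x : List Bool) (hlt : p.length < x.length) :
    (p ++ [true]) <+: x ↔ (p <+: x ∧ ¬ (p ++ [false]) <+: x) := by
  constructor
  · intro h
    refine ⟨(List.prefix_append p [true]).trans h, ?_⟩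
    intro h'
    have hcmp : (p ++ [true]) = (p ++ [false]) :=
      (List.prefix_of_prefix_length_le h h' (by simp)).eq_of_length (by simp)
    have := List.append_cancel_left hcmp
    simp at this
  · rintro ⟨⟨t, rfl⟩, hneg⟩
    cases t with
    | nil => simp at hlt
    | cons b t' =>
      cases b with
      | false => exact absurd ⟨t', by simp⟩ hneg
      | true => exact ⟨t', by simp⟩

private lemma split_card (S : Finset (List Bool)) (w : ℕ)
    (hlen : ∀ x ∈ S, x.length = w) (p : List Bool) (hp : p.length < w) :
    (S.filter (fun x => p <+: x)).card =
      (S.filter (fun x => (p ++ [false]) <+: x)).card +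
      (S.filter (fun x => (p ++ [true]) <+: x)).card := by
  classical
  have h1 : S.filter (fun x => (p ++ [false]) <+: x)
      = (S.filter (fun x => p <+: x)).filter (fun x => (p ++ [false]) <+: x) := by
    rw [Finset.filter_filter]
    apply Finset.filter_congr
    intro x hx
    constructor
    · intro h; exact ⟨(List.prefix_append p [false]).trans h, h⟩
    · exact fun h => h.2
  have h2 : S.filter (fun x => (p ++ [true]) <+: x)
      = (S.filter (fun x => p <+: x)).filter (fun x => ¬ (p ++ [false]) <+: x) := by
    rw [Finset.filter_filter]
    apply Finset.filter_congr
    intro x hx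
    have hx' : p.length < x.length := by rw [hlen x hx]; exact hp
    exact prefix_iff_true p x hx'
  rw [h1, h2]
  exact (Finset.card_filter_add_card_filter_not
    (p := fun x => (p ++ [false]) <+: x)).symm

private lemma aux_descent (S : Finset (List Bool)) (w : ℕ)
    (hlen : ∀ x ∈ S, x.length = w) (hS : 2 ≤ S.card) :
    ∀ (k : ℕ) (p : List Bool), p.length + k = w →
      2 * S.card < 3 * (S.filter (fun x => p <+: x)).card →
      ∃ q : List Bool, S.card ≤ 3 * (S.filter (fun x => q <+: x)).card ∧
        3 * (S.filter (fun x => q <+: x)).card ≤ 2 * S.card := by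
  intro k
  induction k with
  | zero =>
    intro p hp hbig
    exfalso
    have hsub : S.filter (fun x => p <+: x) ⊆ {p} := by
      intro x hx
      rw [Finset.mem_filter] at hx
      have hl : x.length = w := hlen x hx.1
      have hx2 : x = p := (hx.2.eq_of_length (by omega)).symm
      simp [hx2]
    have := Finset.card_le_card hsub
    simp only [Finset.card_singleton] at this
    omega
  | succ k ih =>
    intro p hp hbig
    have hsplit := split_card S w hlen p (by omega)
    obtain ⟨b, hb⟩ : ∃ b : Bool,
        (S.filter (fun x => p <+: x)).card ≤
          2 * (S.filter (fun x => (p ++ [b]) <+: x)).card := by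
      by_cases hc : (S.filter (fun x => (p ++ [false]) <+: x)).card ≤
          (S.filter (fun x => (p ++ [true]) <+: x)).card
      · exact ⟨true, by omega⟩
      · exact ⟨false, by omega⟩
    by_cases hle : 3 * (S.filter (fun x => (p ++ [b]) <+: x)).card ≤ 2 * S.card
    · exact ⟨p ++ [b], by omega, hle⟩
    · exact ih (p ++ [b]) (by simp; omega) (by omega)

/-- **Prefix partitioning.** Every set of at least two equal-length binary strings
can be split by some prefix `p` into two parts each of size between `|S|/3` and `2|S|/3`. -/
theorem prefix_partitioning (w : ℕ) (S : Finset (List Bool))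
    (hlen : ∀ x ∈ S, x.length = w) (hS : 2 ≤ S.card) :
    ∃ p : List Bool,
      S.card ≤ 3 * (S.filter (fun x => p <+: x)).card ∧
      3 * (S.filter (fun x => p <+: x)).card ≤ 2 * S.card ∧
      S.card ≤ 3 * (S.filter (fun x => ¬ (p <+: x))).card ∧
      3 * (S.filter (fun x => ¬ (p <+: x))).card ≤ 2 * S.card := by
  classical
  have hstart : (S.filter (fun x => ([] : List Bool) <+: x)).card = S.card := by
    rw [Finset.filter_true_of_mem]
    intro x _; exact List.nil_prefix
  obtain ⟨q, hq1, hq2⟩ := aux_descent S w hlen hS w [] (by simp)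
    (by rw [hstart]; omega)
  have hcompl := Finset.card_filter_add_card_filter_not
    (s := S) (p := fun x => q <+: x)
  exact ⟨q, hq1, hq2, by omega, by omega⟩
end

section
/- Let w, m ∈ ℕ with m ≤ w, let S be a finite nonempty set of natural numbers all less than 2^w, and let x < 2^w be such that some element of S is ≤ x. Let y be the maximum element of {s ∈ S : s ≤ x} (the predecessor of x in S). Let p < 2^m be such that S_p := {s ∈ S : s / 2^(w−m) = p} is nonempty, and let p_min and p_max be the minimum and maximum of S_p respectively. Then: (a) if x / 2^(w−m) = p, then either y ∈ S_p, or the set {s ∈ S : s < p_min} is nonempty and y is its maximum; (b) if x / 2^(w−m) ≠ p, then y ∈ S \ S_p or y = p_max. -/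
/-- **Predecessor preservation in the B-structure.** Let `y` be the predecessor of `x` in `S`
and let `S_p = {s ∈ S : s / 2^(w−m) = p}` be nonempty with minimum `pmin` and maximum `pmax`.
(a) If `x` has prefix `p` then either `y ∈ S_p`, or `{s ∈ S : s < pmin}` is nonempty and `y`
is its maximum. (b) If `x` does not have prefix `p` then `y ∈ S \ S_p` or `y = pmax`. -/
theorem predecessor_preserved (w m p x : ℕ) (hm : m ≤ w) (hp : p < 2 ^ m)
    (S : Finset ℕ) (hSne : S.Nonempty) (hS : ∀ s ∈ S, s < 2 ^ w) (hx : x < 2 ^ w)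
    (y : ℕ) (hyS : y ∈ S) (hyx : y ≤ x) (hymax : ∀ s ∈ S, s ≤ x → s ≤ y)
    (hSpne : (S.filter (fun s => s / 2 ^ (w - m) = p)).Nonempty)
    (pmin pmax : ℕ)
    (hpmin : pmin = (S.filter (fun s => s / 2 ^ (w - m) = p)).min' hSpne)
    (hpmax : pmax = (S.filter (fun s => s / 2 ^ (w - m) = p)).max' hSpne) :
    (x / 2 ^ (w - m) = p →
      (y ∈ S.filter (fun s => s / 2 ^ (w - m) = p) ∨
        (y ∈ S.filter (fun s => s < pmin) ∧
          ∀ s ∈ S.filter (fun s => s < pmin), s ≤ y))) ∧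
    (x / 2 ^ (w - m) ≠ p →
      (y ∈ S \ S.filter (fun s => s / 2 ^ (w - m) = p) ∨ y = pmax)) := by
  set d := 2 ^ (w - m) with hd
  have hdiv_lt : ∀ a b : ℕ, a / d < b / d → a < b := by
    intro a b h
    by_contra hab
    push_neg at hab
    exact absurd (Nat.div_le_div_right hab) (Nat.not_le.mpr h)
  constructor
  · intro hxp
    by_cases hyp : y / d = p
    · left; exact Finset.mem_filter.mpr ⟨hyS, hyp⟩
    · right
      have hpminmem : pmin ∈ S.filter (fun s => s / d = p) := hpmin ▸ Finset.min'_mem _ _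
      obtain ⟨hpminS, hpminP⟩ := Finset.mem_filter.mp hpminmem
      have hylt : y < pmin := by
        apply hdiv_lt
        rw [hpminP]
        have h1 : y / d ≤ x / d := Nat.div_le_div_right hyx
        rw [hxp] at h1
        exact lt_of_le_of_ne h1 hyp
      refine ⟨Finset.mem_filter.mpr ⟨hyS, hylt⟩, ?_⟩
      intro s hs
      obtain ⟨hsS, hslt⟩ := Finset.mem_filter.mp hs
      apply hymax s hsS
      have hsp : s / d ≤ p := hpminP ▸ Nat.div_le_div_right hslt.le
      have hsp' : s / d ≠ p := by
        intro h
        have : pmin ≤ s := by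
          have hmem : s ∈ S.filter (fun t => t / d = p) := Finset.mem_filter.mpr ⟨hsS, h⟩
          rw [hpmin]; exact Finset.min'_le _ s hmem
        omega
      have : s < x := hdiv_lt s x (by rw [hxp]; exact lt_of_le_of_ne hsp hsp')
      exact this.le
  · intro hxp
    by_cases hyp : y / d = p
    · right
      have hpmaxmem : pmax ∈ S.filter (fun s => s / d = p) := hpmax ▸ Finset.max'_mem _ _
      obtain ⟨hpmaxS, hpmaxP⟩ := Finset.mem_filter.mp hpmaxmem
      have h1 : p ≤ x / d := hyp ▸ Nat.div_le_div_right hyx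
      have h2 : p < x / d := lt_of_le_of_ne h1 (fun h => hxp h.symm)
      have hpx : pmax < x := hdiv_lt pmax x (by rw [hpmaxP]; exact h2)
      have h3 : pmax ≤ y := hymax pmax hpmaxS hpx.le
      have h4 : y ≤ pmax := by
        have hmem : y ∈ S.filter (fun t => t / d = p) := Finset.mem_filter.mpr ⟨hyS, hyp⟩
        rw [hpmax]; exact Finset.le_max' _ y hmem
      omega
    · left
      exact Finset.mem_sdiff.mpr ⟨hyS, fun h => hyp (Finset.mem_filter.mp h).2⟩
end

section
/- Let V be a finite type and let m₁, m₂ : V → V be two involutions without fixed points (m₁(m₁(v)) = v, m₂(m₂(v)) = v, m₁(v) ≠ v, and m₂(v) ≠ v for all v ∈ V). Then there exists a function f : V → Bool such that for every v ∈ V, f(m₁(v)) ≠ f(v) and f(m₂(v)) ≠ f(v). -/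
/-- **2-coloring for two fixed-point-free involutions.** The union of the two perfect
matchings given by `m₁` and `m₂` decomposes into even cycles, hence admits a proper
2-coloring `f` separating every vertex from both of its mates. -/
theorem two_involutions_two_coloring {V : Type*} [Fintype V] (m₁ m₂ : V → V)
    (h₁ : ∀ v, m₁ (m₁ v) = v) (h₂ : ∀ v, m₂ (m₂ v) = v)
    (hf₁ : ∀ v, m₁ v ≠ v) (hf₂ : ∀ v, m₂ v ≠ v) :
    ∃ f : V → Bool, ∀ v, f (m₁ v) ≠ f v ∧ f (m₂ v) ≠ f v := by
  classical
  set σ : Equiv.Perm V := ⟨m₁, m₁, h₁, h₁⟩ with hσ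
  set τ : Equiv.Perm V := ⟨m₂, m₂, h₂, h₂⟩ with hτ
  set p : Equiv.Perm V := σ * τ with hp
  have hσ2 : ∀ x, σ (σ x) = x := h₁
  have hτ2 : ∀ x, τ (τ x) = x := h₂
  have hσσ : σ * σ = 1 := Equiv.ext h₁
  have hττ : τ * τ = 1 := Equiv.ext h₂
  have hσinv : σ⁻¹ = σ := by rw [inv_eq_iff_mul_eq_one]; exact hσσ
  have hτinv : τ⁻¹ = τ := by rw [inv_eq_iff_mul_eq_one]; exact hττ
  have hpinv : p⁻¹ = τ * σ := by rw [hp, mul_inv_rev, hσinv, hτinv]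
  have hconj : ∀ k : ℤ, σ * p ^ k * σ = p ^ (-k) := by
    intro k
    have h1 : σ * p * σ⁻¹ = p⁻¹ := by
      rw [hσinv, hpinv, hp, ← mul_assoc, hσσ, one_mul]
    calc σ * p ^ k * σ = σ * p ^ k * σ⁻¹ := by rw [hσinv]
      _ = (σ * p * σ⁻¹) ^ k := conj_zpow.symm
      _ = (p⁻¹) ^ k := by rw [h1]
      _ = p ^ (-k) := by rw [inv_zpow, zpow_neg]
  have hconjτ : ∀ k : ℤ, τ * p ^ k * τ = p ^ (-k) := by
    intro k
    have h1 : τ * p * τ⁻¹ = p⁻¹ := by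
      rw [hτinv, hpinv, hp, ← mul_assoc, mul_assoc (τ * σ), hττ, mul_one]
    calc τ * p ^ k * τ = τ * p ^ k * τ⁻¹ := by rw [hτinv]
      _ = (τ * p * τ⁻¹) ^ k := conj_zpow.symm
      _ = (p⁻¹) ^ k := by rw [h1]
      _ = p ^ (-k) := by rw [inv_zpow, zpow_neg]
  have hswap : ∀ (k : ℤ) (x : V), σ ((p ^ k) x) = (p ^ (-k)) (σ x) := by
    intro k x
    have h := congrArg (fun g : Equiv.Perm V => g (σ x)) (hconj k)
    simp only [Equiv.Perm.mul_apply] at h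
    rw [hσ2] at h
    exact h
  have hswapτ : ∀ (k : ℤ) (x : V), τ ((p ^ k) x) = (p ^ (-k)) (τ x) := by
    intro k x
    have h := congrArg (fun g : Equiv.Perm V => g (τ x)) (hconjτ k)
    simp only [Equiv.Perm.mul_apply] at h
    rw [hτ2] at h
    exact h
  have hpow : ∀ (j k : ℤ) (x : V), (p ^ j) ((p ^ k) x) = (p ^ (j + k)) x := by
    intro j k x
    rw [zpow_add]
    rfl
  have hτσ : ∀ x, τ (σ x) = (p ^ (-1 : ℤ)) x := by
    intro x
    rw [zpow_neg_one, hpinv, Equiv.Perm.mul_apply]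
  -- every "odd word" p^k * σ is fixed-point-free
  have hodd : ∀ (k : ℤ) (v : V), (p ^ k) (σ v) ≠ v := by
    intro k v hk
    have h3 : σ v = (p ^ (-k)) v := by
      conv_rhs => rw [← hk]
      rw [hpow]
      have e : -k + k = 0 := by omega
      rw [e]
      simp
    rcases Int.even_or_odd k with ⟨a, ha⟩ | ⟨a, ha⟩
    · -- k = a + a : p^k σ is conjugate to σ
      apply hf₁ ((p ^ (-a)) v)
      show σ ((p ^ (-a)) v) = (p ^ (-a)) v
      rw [hswap, neg_neg, h3, hpow]
      have e : a + -k = -a := by omega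
      rw [e]
    · -- k = 2a+1 : p^k σ is conjugate to τ
      apply hf₂ (σ ((p ^ (-a)) v))
      show τ (σ ((p ^ (-a)) v)) = σ ((p ^ (-a)) v)
      have e1 : σ ((p ^ (-a)) v) = (p ^ (a + -k)) v := by
        rw [hswap, neg_neg, h3, hpow]
      rw [hτσ, hpow, e1]
      have e : (-1 : ℤ) + -a = a + -k := by omega
      rw [e]
  have hσfix : ∀ (m : ℤ) (u : V), σ u ≠ (p ^ m) u := by
    intro m u h
    apply hodd (-m) u
    rw [h, hpow]
    have e : -m + m = 0 := by omega
    rw [e]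
    simp
  have hτfix : ∀ (m : ℤ) (u : V), τ u ≠ (p ^ m) u := by
    intro m u h
    apply hσfix (m + 1) u
    have h8 : (p ^ (1 : ℤ)) u = (p ^ (-m)) (σ u) := by
      rw [zpow_one]
      calc p u = σ (τ u) := by rw [hp, Equiv.Perm.mul_apply]
        _ = σ ((p ^ m) u) := by rw [h]
        _ = (p ^ (-m)) (σ u) := hswap m u
    have h9 := congrArg (fun x => (p ^ m) x) h8
    simp only [hpow] at h9
    have e : m + -m = 0 := by omega
    rw [e] at h9
    simp only [zpow_zero, Equiv.Perm.one_apply] at h9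
    exact h9.symm
  -- not both even-reachable
  have nbσ : ∀ u v : V, (∃ k : ℤ, (p ^ k) u = v) → (∃ j : ℤ, (p ^ j) u = σ v) → False := by
    rintro u v ⟨k, hk⟩ ⟨j, hj⟩
    apply hσfix (k + j) u
    symm
    rw [← hpow, hj, ← hk, hswap, hpow]
    have e : k + -k = 0 := by omega
    rw [e]
    simp
  have nbτ : ∀ u v : V, (∃ k : ℤ, (p ^ k) u = v) → (∃ j : ℤ, (p ^ j) u = τ v) → False := by
    rintro u v ⟨k, hk⟩ ⟨j, hj⟩
    apply hτfix (k + j) u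
    symm
    rw [← hpow, hj, ← hk, hswapτ, hpow]
    have e : k + -k = 0 := by omega
    rw [e]
    simp
  -- orbit setoid
  let r : V → V → Prop := fun v w => ∃ k : ℤ, (p ^ k) v = w ∨ (p ^ k) (σ v) = w
  have hrefl : ∀ v, r v v := fun v => ⟨0, Or.inl rfl⟩
  have hsymm : ∀ {v w}, r v w → r w v := by
    rintro v w ⟨k, hk | hk⟩
    · refine ⟨-k, Or.inl ?_⟩
      rw [← hk, hpow]
      have e : -k + k = 0 := by omega
      rw [e]; simp
    · refine ⟨k, Or.inr ?_⟩
      rw [← hk, hswap, hσ2, hpow]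
      have e : k + -k = 0 := by omega
      rw [e]; simp
  have htrans : ∀ {u v w}, r u v → r v w → r u w := by
    rintro u v w ⟨k, hk | hk⟩ ⟨j, hj | hj⟩
    · exact ⟨j + k, Or.inl (by rw [← hpow, hk, hj])⟩
    · refine ⟨j + -k, Or.inr ?_⟩
      rw [← hpow, ← hj]
      congr 1
      rw [← hk, hswap]
    · exact ⟨j + k, Or.inr (by rw [← hpow, hk, hj])⟩
    · refine ⟨j + -k, Or.inl ?_⟩
      rw [← hpow, ← hj]
      congr 1
      rw [← hk, hswap, hσ2]
  let s : Setoid V := ⟨r, fun v => hrefl v, hsymm, htrans⟩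
  let rep : V → V := fun v => (Quotient.mk s v).out
  have hrep : ∀ v, r (rep v) v := by
    intro v
    have := Quotient.exact (Quotient.out_eq (Quotient.mk s v))
    exact this
  have hrepeq : ∀ {v w}, r v w → rep v = rep w := by
    intro v w h
    show (Quotient.mk s v).out = (Quotient.mk s w).out
    rw [Quotient.sound h]
  let E : V → V → Prop := fun u v => ∃ k : ℤ, (p ^ k) u = v
  let f : V → Bool := fun v => decide (E (rep v) v)
  refine ⟨f, fun v => ?_⟩
  have hrσ : rep (σ v) = rep v := by
    refine hrepeq ⟨0, Or.inr ?_⟩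
    rw [hσ2]
    simp
  have hrτ : rep (τ v) = rep v := by
    refine hrepeq ⟨-1, Or.inr ?_⟩
    have hστapp : σ (τ v) = p v := (Equiv.Perm.mul_apply σ τ v).symm
    have h9 : p v = (p ^ (1 : ℤ)) v := by rw [zpow_one]
    rw [hστapp, h9, hpow]
    have e : (-1 : ℤ) + 1 = 0 := by omega
    rw [e]; simp
  show f (σ v) ≠ f v ∧ f (τ v) ≠ f v
  obtain ⟨k, hk | hk⟩ := hrep v
  · have hEv : E (rep v) v := ⟨k, hk⟩
    have hnσ : ¬ E (rep v) (σ v) := fun h => nbσ _ _ hEv h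
    have hnτ : ¬ E (rep v) (τ v) := fun h => nbτ _ _ hEv h
    constructor
    · show decide (E (rep (σ v)) (σ v)) ≠ decide (E (rep v) v)
      rw [hrσ]
      simp [hEv, hnσ]
    · show decide (E (rep (τ v)) (τ v)) ≠ decide (E (rep v) v)
      rw [hrτ]
      simp [hEv, hnτ]
  · have hEσ : E (rep v) (σ v) := ⟨-k, by
      conv_rhs => rw [← hk]
      rw [hswap, hσ2]⟩
    have hEτ : E (rep v) (τ v) := ⟨-k + -1, by
      conv_rhs => rw [← hk]
      rw [hswapτ, hτσ, hpow]⟩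
    have hnv : ¬ E (rep v) v := fun h => nbσ _ _ h hEσ
    constructor
    · show decide (E (rep (σ v)) (σ v)) ≠ decide (E (rep v) v)
      rw [hrσ]
      simp [hEσ, hnv]
    · show decide (E (rep (τ v)) (τ v)) ≠ decide (E (rep v) v)
      rw [hrτ]
      simp [hEτ, hnv]
end

section
/- Let n ≥ 1 and let σ be a permutation of Fin(2n). Define the mate involution m : Fin(2n) → Fin(2n) by m(i) = i + n if i < n and m(i) = i − n otherwise. Then there exists a routing function f : Fin(2n) → Bool such that for every i ∈ Fin(2n): f(i) ≠ f(m(i)), and f(σ⁻¹(m(σ(i)))) ≠ f(i). -/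
/-- The mate of input `i` in a Benes network of size `2n`: `i + n` if `i < n`, else `i − n`. -/
def benesMate (n : ℕ) (i : Fin (2 * n)) : Fin (2 * n) :=
  if h : (i : ℕ) < n then ⟨(i : ℕ) + n, by have := i.isLt; omega⟩
  else ⟨(i : ℕ) - n, by have := i.isLt; omega⟩


section LoopingAux

variable {α : Type*} [Fintype α] [LinearOrder α]

/-- Orbit relation of the group generated by `p` and the involution `a`. -/
def loopR (p a : Equiv.Perm α) (i j : α) : Prop :=
  ∃ k : ℤ, j = (p ^ k) i ∨ j = (p ^ k) (a i)

open Classical in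
noncomputable def loopCls (p a : Equiv.Perm α) (i : α) : Finset α :=
  Finset.univ.filter (loopR p a i)

lemma loopR_refl (p a : Equiv.Perm α) (i : α) : loopR p a i i :=
  ⟨0, Or.inl (by simp)⟩

lemma loopCls_nonempty (p a : Equiv.Perm α) (i : α) : (loopCls p a i).Nonempty := by
  classical
  exact ⟨i, by simp [loopCls, loopR_refl]⟩

noncomputable def loopRep (p a : Equiv.Perm α) (i : α) : α :=
  (loopCls p a i).min' (loopCls_nonempty p a i)

open Classical in
noncomputable def loopF (p a : Equiv.Perm α) (i : α) : Bool :=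
  if ∃ k : ℤ, i = (p ^ k) (loopRep p a i) then true else false

variable {p a : Equiv.Perm α}
  (hpa : ∀ (k : ℤ) (x : α), a ((p ^ k) x) = (p ^ (-k)) (a x))
  (ha2 : ∀ x : α, a (a x) = x)

lemma loop_pp (k m : ℤ) (x : α) : (p ^ k) ((p ^ m) x) = (p ^ (k + m)) x := by
  rw [← Equiv.Perm.mul_apply, ← zpow_add]

include hpa ha2 in
lemma loopR_symm {i j : α} (h : loopR p a i j) : loopR p a j i := by
  obtain ⟨k, h | h⟩ := h
  · exact ⟨-k, Or.inl (by rw [h, loop_pp]; simp)⟩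
  · refine ⟨k, Or.inr ?_⟩
    have : a i = (p ^ (-k)) j := by rw [h, loop_pp]; simp
    calc i = a (a i) := (ha2 i).symm
      _ = a ((p ^ (-k)) j) := by rw [this]
      _ = (p ^ k) (a j) := by rw [hpa]; norm_num

include hpa ha2 in
lemma loopR_trans {i j l : α} (h1 : loopR p a i j) (h2 : loopR p a j l) : loopR p a i l := by
  obtain ⟨k, h1 | h1⟩ := h1 <;> obtain ⟨m, h2 | h2⟩ := h2
  · exact ⟨m + k, Or.inl (by rw [h2, h1, loop_pp])⟩
  · refine ⟨m - k, Or.inr ?_⟩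
    rw [h2, h1, hpa, loop_pp]; ring_nf
  · refine ⟨m + k, Or.inr (by rw [h2, h1, loop_pp])⟩
  · refine ⟨m - k, Or.inl ?_⟩
    rw [h2, h1, hpa, loop_pp, ha2]; ring_nf


include hpa ha2 in
lemma loopRep_eq {i j : α} (h : loopR p a i j) : loopRep p a i = loopRep p a j := by
  classical
  have hcls : loopCls p a i = loopCls p a j := by
    ext x
    simp only [loopCls, Finset.mem_filter, Finset.mem_univ, true_and]
    constructor
    · exact fun hx => loopR_trans hpa ha2 (loopR_symm hpa ha2 h) hx
    · exact fun hx => loopR_trans hpa ha2 h hx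
  simp [loopRep, hcls]

include hpa ha2 in
lemma loopR_rep (i : α) : loopR p a i (loopRep p a i) := by
  classical
  have := (loopCls p a i).min'_mem (loopCls_nonempty p a i)
  exact (Finset.mem_filter.mp this).2

include hpa ha2 in
lemma loopF_true_iff (i : α) :
    loopF p a i = true ↔ ∃ k : ℤ, i = (p ^ k) (loopRep p a i) := by
  classical
  simp [loopF]

variable (hno : ∀ (x : α) (k : ℤ), a x ≠ (p ^ k) x)

include hpa ha2 hno in
lemma loopF_false_iff (i : α) :
    loopF p a i = false ↔ ∃ k : ℤ, i = (p ^ k) (a (loopRep p a i)) := by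
  classical
  constructor
  · intro hf
    have hR := loopR_rep hpa ha2 (p := p) (a := a) i
    obtain ⟨k, h | h⟩ := hR
    · exfalso
      have : loopF p a i = true := by
        rw [loopF_true_iff hpa ha2]
        exact ⟨-k, by rw [h, loop_pp]; simp⟩
      simp [this] at hf
    · refine ⟨k, ?_⟩
      have : a i = (p ^ (-k)) (loopRep p a i) := by rw [h, loop_pp]; simp
      calc i = a (a i) := (ha2 i).symm
        _ = a ((p ^ (-k)) (loopRep p a i)) := by rw [this]
        _ = (p ^ k) (a (loopRep p a i)) := by rw [hpa]; norm_num
  · intro ⟨k, hk⟩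
    by_contra hf
    have hf' : loopF p a i = true := by
      cases h : loopF p a i
      · exact absurd h hf
      · rfl
    rw [loopF_true_iff hpa ha2] at hf'
    obtain ⟨m, hm⟩ := hf'
    apply hno (loopRep p a i) (-k + m)
    have : (p ^ k) (a (loopRep p a i)) = (p ^ m) (loopRep p a i) := hk.symm.trans hm
    have := congrArg (p ^ (-k) : Equiv.Perm α) this
    rw [loop_pp, loop_pp] at this
    simpa using this

include hpa ha2 hno in
lemma loopF_a (i : α) : loopF p a (a i) = ! loopF p a i := by
  classical
  have hrep : loopRep p a (a i) = loopRep p a i :=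
    (loopRep_eq hpa ha2 ⟨0, Or.inr (by simp)⟩).symm
  cases hf : loopF p a i
  · -- f i = false : i = p^m (a rep), so a i = p^(-m) rep, f (a i) = true
    rw [loopF_false_iff hpa ha2 hno] at hf
    obtain ⟨m, hm⟩ := hf
    have : loopF p a (a i) = true := by
      rw [loopF_true_iff hpa ha2, hrep]
      refine ⟨-m, ?_⟩
      conv_lhs => rw [hm]
      rw [hpa, ha2]
    simp [this]
  · -- f i = true : i = p^k rep, a i = p^(-k)(a rep), f (a i) = false
    rw [loopF_true_iff hpa ha2] at hf
    obtain ⟨k, hk⟩ := hf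
    have : loopF p a (a i) = false := by
      rw [loopF_false_iff hpa ha2 hno, hrep]
      refine ⟨-k, ?_⟩
      conv_lhs => rw [hk]
      rw [hpa]
    simp [this]

include hpa ha2 in
lemma loopF_p (i : α) : loopF p a (p i) = loopF p a i := by
  classical
  have hp1 : p i = (p ^ (1 : ℤ)) i := by simp
  have hrep : loopRep p a (p i) = loopRep p a i :=
    (loopRep_eq hpa ha2 ⟨1, Or.inl hp1⟩).symm
  have h1 : loopF p a (p i) = true ↔ loopF p a i = true := by
    rw [loopF_true_iff hpa ha2, loopF_true_iff hpa ha2, hrep]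
    constructor
    · rintro ⟨k, hk⟩
      refine ⟨-1 + k, ?_⟩
      have h := congrArg (⇑(p ^ (-1:ℤ))) hk
      rw [hp1, loop_pp, loop_pp] at h
      simpa using h
    · rintro ⟨k, hk⟩
      refine ⟨1 + k, ?_⟩
      conv_lhs => rw [hp1, hk]
      rw [loop_pp]
  cases hg : loopF p a (p i) <;> cases hf' : loopF p a i <;> simp_all

include hpa ha2 hno in
lemma loopF_a_ne (i : α) : loopF p a i ≠ loopF p a (a i) := by
  rw [loopF_a hpa ha2 hno]
  cases loopF p a i <;> simp

include hpa ha2 hno in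
lemma loopF_ap_ne (i : α) : loopF p a (a (p i)) ≠ loopF p a i := by
  rw [loopF_a hpa ha2 hno, loopF_p hpa ha2]
  cases loopF p a i <;> simp

end LoopingAux

theorem two_inv_coloring {α : Type*} [Fintype α] [LinearOrder α] (a b : Equiv.Perm α)
    (ha2 : ∀ x, a (a x) = x) (hb2 : ∀ x, b (b x) = x)
    (hafix : ∀ x, a x ≠ x) (hbfix : ∀ x, b x ≠ x) :
    ∃ f : α → Bool, ∀ i, f i ≠ f (a i) ∧ f (b i) ≠ f i := by
  set p := a * b with hp
  have ha1 : a * a = 1 := Equiv.ext fun x => by simp [Equiv.Perm.mul_apply, ha2]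
  have hb1 : b * b = 1 := Equiv.ext fun x => by simp [Equiv.Perm.mul_apply, hb2]
  have hainv : a⁻¹ = a := inv_eq_of_mul_eq_one_right ha1
  have hbinv : b⁻¹ = b := inv_eq_of_mul_eq_one_right hb1
  have hconj : a * p * a⁻¹ = p⁻¹ := by
    rw [hainv, hp, mul_inv_rev, hainv, hbinv, ← mul_assoc a a b, ha1, one_mul]
  have hpa : ∀ (k : ℤ) (x : α), a ((p ^ k) x) = (p ^ (-k)) (a x) := by
    intro k x
    have h : p ^ (-k) = a * p ^ k * a⁻¹ := by
      rw [zpow_neg, ← inv_zpow, ← hconj, conj_zpow]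
    rw [h]
    simp [Equiv.Perm.mul_apply, hainv, ha2]
  have hbap : ∀ y, b y = a (p y) := by
    intro y
    rw [hp]
    simp [Equiv.Perm.mul_apply, ha2]
  have hp1 : ∀ y : α, p y = (p ^ (1 : ℤ)) y := fun y => by simp
  have hno : ∀ (x : α) (k : ℤ), a x ≠ (p ^ k) x := by
    intro x k h
    rcases Int.even_or_odd k with ⟨j, hj⟩ | ⟨j, hj⟩
    · apply hafix ((p ^ j) x)
      calc a ((p ^ j) x) = (p ^ (-j)) (a x) := hpa j x
        _ = (p ^ (-j)) ((p ^ k) x) := by rw [h]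
        _ = (p ^ (-j + k)) x := loop_pp _ _ _
        _ = (p ^ j) x := by rw [show -j + k = j by omega]
    · apply hbfix ((p ^ j) x)
      calc b ((p ^ j) x) = a ((p ^ ((1:ℤ) + j)) x) := by rw [hbap, hp1, loop_pp]
        _ = (p ^ (-((1:ℤ) + j))) (a x) := hpa _ _
        _ = (p ^ (-((1:ℤ) + j))) ((p ^ k) x) := by rw [h]
        _ = (p ^ (-((1:ℤ) + j) + k)) x := loop_pp _ _ _
        _ = (p ^ j) x := by rw [show -((1:ℤ) + j) + k = j by omega]
  refine ⟨loopF p a, fun i => ⟨loopF_a_ne hpa ha2 hno i, ?_⟩⟩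
  rw [hbap i]
  exact loopF_ap_ne hpa ha2 hno i

lemma benesMate_involutive (n : ℕ) : Function.Involutive (benesMate n) := by
  intro i
  have hi := i.isLt
  unfold benesMate
  rcases lt_or_ge (i : ℕ) n with h | h
  · rw [dif_pos h, dif_neg (show ¬((i : ℕ) + n < n) by omega)]
    apply Fin.ext
    show (i : ℕ) + n - n = (i : ℕ)
    omega
  · rw [dif_neg (show ¬((i : ℕ) < n) by omega), dif_pos (show (i : ℕ) - n < n by omega)]
    apply Fin.ext
    show (i : ℕ) - n + n = (i : ℕ)
    omega

lemma benesMate_ne (n : ℕ) (hn : 1 ≤ n) (i : Fin (2 * n)) : benesMate n i ≠ i := by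
  have hi := i.isLt
  simp only [benesMate]
  split_ifs with h <;> intro hc <;> have := congrArg Fin.val hc <;> simp at this <;> omega


/-- **Correctness of the looping algorithm.** For every permutation `σ` of the inputs of a
Benes network of size `2n`, there is a routing `f` separating input mates and separating
the two inputs that `σ` sends to mate outputs. -/
theorem looping_algorithm (n : ℕ) (hn : 1 ≤ n) (σ : Equiv.Perm (Fin (2 * n))) :
    ∃ f : Fin (2 * n) → Bool, ∀ i : Fin (2 * n),
      f i ≠ f (benesMate n i) ∧ f (σ.symm (benesMate n (σ i))) ≠ f i := by
  have hinv := benesMate_involutive n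
  set a : Equiv.Perm (Fin (2 * n)) := Function.Involutive.toPerm _ hinv with ha
  have haapp : ∀ x, a x = benesMate n x := fun x => rfl
  set b : Equiv.Perm (Fin (2 * n)) := σ⁻¹ * a * σ with hb
  have hbapp : ∀ x, b x = σ.symm (benesMate n (σ x)) := fun x => rfl
  have ha2 : ∀ x, a (a x) = x := fun x => hinv x
  have hb2 : ∀ x, b (b x) = x := by
    intro x
    simp only [hbapp]
    rw [Equiv.apply_symm_apply, hinv, Equiv.symm_apply_apply]
  have hafix : ∀ x, a x ≠ x := fun x => benesMate_ne n hn x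
  have hbfix : ∀ x, b x ≠ x := by
    intro x h
    apply hafix (σ x)
    rw [hbapp] at h
    have := congrArg σ h
    rwa [Equiv.apply_symm_apply] at this
  obtain ⟨f, hf⟩ := two_inv_coloring a b ha2 hb2 hafix hbfix
  exact ⟨f, fun i => ⟨(hf i).1, by rw [← hbapp]; exact (hf i).2⟩⟩
end
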